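/- If C = (t - h₁)(t - h₂) = (t - k₁)(t - k₂) is a complementary pair of factorizations (i.e. C·conj(C) = (t-h₁)(t-conj(h₁))(t-k₁)(t-conj(k₁))), then also C·conj(C) = (t-h₂)(t-conj(h₂))(t-k₂)(t-conj(k₂)). -/

import Mathlib

open Quaternion Polynomial

/-- The split quaternions: `i² = -1`, `j² = k² = 1`. -/
abbrev SplitQuaternion : Type := ℍ[ℝ, -1, 1]

/-- Coefficientwise conjugation of a split quaternion polynomial. -/
noncomputable def pconj (C : Polynomial SplitQuaternion) : Polynomial SplitQuaternion :=
  ⟨AddMonoidAlgebra.ofCoeff (Finsupp.mapRange star (star_zero _) C.toFinsupp.coeff)⟩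

lemma pconj_coeff (p : Polynomial SplitQuaternion) (n : ℕ) :
    (pconj p).coeff n = star (p.coeff n) := rfl

lemma pconj_mul (p q : Polynomial SplitQuaternion) :
    pconj (p * q) = pconj q * pconj p := by
  refine Polynomial.ext fun n => ?_
  rw [pconj_coeff, coeff_mul, coeff_mul, star_sum, ← Finset.Nat.sum_antidiagonal_swap]
  exact Finset.sum_congr rfl fun x _ => by simp [pconj_coeff, star_mul]

lemma pconj_X_sub_C (a : SplitQuaternion) :
    pconj (X - Polynomial.C a) = X - Polynomial.C (star a) := by
  refine Polynomial.ext fun n => ?_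
  rw [pconj_coeff]
  simp only [coeff_sub, coeff_X, coeff_C, star_sub]
  split_ifs <;> simp

/-- `(X - C a) * (X - C (star a))` expanded. -/
lemma N_eq (a : SplitQuaternion) :
    (X - Polynomial.C a) * (X - Polynomial.C (star a))
      = X ^ 2 - Polynomial.C (a + star a) * X + Polynomial.C (a * star a) := by
  have hX : Polynomial.C (star a) * X = X * Polynomial.C (star a) := (commute_X _).symm
  rw [sub_mul, mul_sub, mul_sub, ← Polynomial.C_mul, Polynomial.C_add, add_mul, ← hX, sq]
  noncomm_ring

lemma commute_coe (r : ℝ) (p : Polynomial SplitQuaternion) :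
    Commute (Polynomial.C (r : SplitQuaternion)) p := by
  have : (Polynomial.C ((r : SplitQuaternion))) = algebraMap ℝ (Polynomial SplitQuaternion) r := by
    rw [Polynomial.algebraMap_apply]; rfl
  rw [this]
  exact Algebra.commutes r p

lemma commute_N (a : SplitQuaternion) (p : Polynomial SplitQuaternion) :
    Commute ((X - Polynomial.C a) * (X - Polynomial.C (star a))) p := by
  rw [N_eq]
  have h1 : Commute (Polynomial.C (a + star a)) p := by
    rw [QuaternionAlgebra.self_add_star']; exact commute_coe _ p
  have h2 : Commute (Polynomial.C (a * star a)) p := by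
    rw [QuaternionAlgebra.mul_star_eq_coe]; exact commute_coe _ p
  exact (((commute_X p).pow_left 2).sub_left (h1.mul_left (commute_X p))).add_left h2

/-- If `C = (t - h₁)(t - h₂) = (t - k₁)(t - k₂)` is a complementary pair of
factorizations, i.e. `C conj C = (t-h₁)(t-conj h₁)(t-k₁)(t-conj k₁)`, then also
`C conj C = (t-h₂)(t-conj h₂)(t-k₂)(t-conj k₂)`. -/
theorem complementary_symmetry (h₁ h₂ k₁ k₂ : SplitQuaternion)
    (hfac : (X - Polynomial.C h₁) * (X - Polynomial.C h₂)
      = (X - Polynomial.C k₁) * (X - Polynomial.C k₂))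
    (hcomp : ((X - Polynomial.C h₁) * (X - Polynomial.C h₂)) *
        pconj ((X - Polynomial.C h₁) * (X - Polynomial.C h₂))
      = (X - Polynomial.C h₁) * (X - Polynomial.C (star h₁)) *
          ((X - Polynomial.C k₁) * (X - Polynomial.C (star k₁)))) :
    ((X - Polynomial.C h₁) * (X - Polynomial.C h₂)) *
        pconj ((X - Polynomial.C h₁) * (X - Polynomial.C h₂))
      = (X - Polynomial.C h₂) * (X - Polynomial.C (star h₂)) *
          ((X - Polynomial.C k₂) * (X - Polynomial.C (star k₂))) := by
  set N : SplitQuaternion → Polynomial SplitQuaternion :=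
    fun a => (X - Polynomial.C a) * (X - Polynomial.C (star a)) with hN
  set E := ((X - Polynomial.C h₁) * (X - Polynomial.C h₂)) *
      pconj ((X - Polynomial.C h₁) * (X - Polynomial.C h₂)) with hE
  -- E = N h₂ * N h₁
  have e1 : E = N h₂ * N h₁ := by
    rw [hE, pconj_mul, pconj_X_sub_C, pconj_X_sub_C]
    have : (X - Polynomial.C h₁) * ((X - Polynomial.C h₂) * (X - Polynomial.C (star h₂)))
        = N h₂ * (X - Polynomial.C h₁) := (commute_N h₂ _).symm
    calc (X - Polynomial.C h₁) * (X - Polynomial.C h₂) *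
          ((X - Polynomial.C (star h₂)) * (X - Polynomial.C (star h₁)))
        = ((X - Polynomial.C h₁) * ((X - Polynomial.C h₂) * (X - Polynomial.C (star h₂)))) *
            (X - Polynomial.C (star h₁)) := by noncomm_ring
      _ = N h₂ * ((X - Polynomial.C h₁) * (X - Polynomial.C (star h₁))) := by rw [this]; noncomm_ring
      _ = N h₂ * N h₁ := rfl
  -- E = N k₂ * N k₁
  have e2 : E = N k₂ * N k₁ := by
    rw [hE, hfac, pconj_mul, pconj_X_sub_C, pconj_X_sub_C]
    have : (X - Polynomial.C k₁) * ((X - Polynomial.C k₂) * (X - Polynomial.C (star k₂)))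
        = N k₂ * (X - Polynomial.C k₁) := (commute_N k₂ _).symm
    calc (X - Polynomial.C k₁) * (X - Polynomial.C k₂) *
          ((X - Polynomial.C (star k₂)) * (X - Polynomial.C (star k₁)))
        = ((X - Polynomial.C k₁) * ((X - Polynomial.C k₂) * (X - Polynomial.C (star k₂)))) *
            (X - Polynomial.C (star k₁)) := by noncomm_ring
      _ = N k₂ * ((X - Polynomial.C k₁) * (X - Polynomial.C (star k₁))) := by rw [this]; noncomm_ring
      _ = N k₂ * N k₁ := rfl
  have e3 : E = N h₁ * N k₁ := hcomp
  -- E is monic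
  have hmonic : E.Monic := by
    rw [e1, hN]
    exact ((monic_X_sub_C h₂).mul (monic_X_sub_C (star h₂))).mul
      ((monic_X_sub_C h₁).mul (monic_X_sub_C (star h₁)))
  -- E * E = E * (N h₂ * N k₂)
  have key : E * E = E * (N h₂ * N k₂) := by
    calc E * E = (N h₂ * N h₁) * (N k₂ * N k₁) := by rw [← e1, ← e2]
      _ = (N h₁ * N k₁) * (N h₂ * N k₂) := by
          have c1 := commute_N h₂ (N h₁)
          have c2 := commute_N h₂ (N k₁)
          have c3 := commute_N k₂ (N k₁)
          simp only [hN] at c1 c2 c3 ⊢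
          calc ((X - Polynomial.C h₂) * (X - Polynomial.C (star h₂))) *
                ((X - Polynomial.C h₁) * (X - Polynomial.C (star h₁))) *
                (((X - Polynomial.C k₂) * (X - Polynomial.C (star k₂))) *
                ((X - Polynomial.C k₁) * (X - Polynomial.C (star k₁))))
              = ((X - Polynomial.C h₂) * (X - Polynomial.C (star h₂))) *
                ((X - Polynomial.C h₁) * (X - Polynomial.C (star h₁))) *
                (((X - Polynomial.C k₁) * (X - Polynomial.C (star k₁))) *
                ((X - Polynomial.C k₂) * (X - Polynomial.C (star k₂)))) := by
                  rw [c3.eq]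
            _ = (((X - Polynomial.C h₁) * (X - Polynomial.C (star h₁))) *
                ((X - Polynomial.C k₁) * (X - Polynomial.C (star k₁)))) *
                (((X - Polynomial.C h₂) * (X - Polynomial.C (star h₂))) *
                ((X - Polynomial.C k₂) * (X - Polynomial.C (star k₂)))) := by
                  rw [← mul_assoc, ← mul_assoc, c1.eq, mul_assoc
                    ((X - Polynomial.C h₁) * (X - Polynomial.C (star h₁)))]
                  rw [c2.eq]
                  noncomm_ring
      _ = E * (N h₂ * N k₂) := by rw [← e3]
  exact hmonic.isRegular.left key
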